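/- Let H be a weak Hopf algebra and C a left partial H-module coalgebra via ·. Then the same map · makes C a left H-module coalgebra (in particular h·(k·c) = hk·c for all h,k ∈ H, c ∈ C) if and only if ε(h·c) = ε(ε_s(h)·c) for all h ∈ H and c ∈ C. -/

import Mathlib

open TensorProduct Coalgebra

noncomputable section

variable (k : Type*) [Field k]

section WeakHopfDefs

variable (H : Type*) [Ring H] [Algebra k H] [Coalgebra k H]

/-- The target map `ε_t(h) = ε(1₁ h) 1₂` of a weak bialgebra. -/
def wεt (h : H) : H :=
  (TensorProduct.lid k H)
    ((TensorProduct.map (counit (R := k) ∘ₗ LinearMap.mulRight k h) (LinearMap.id))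
      (comul (R := k) (1 : H)))

/-- The source map `ε_s(h) = 1₁ ε(h 1₂)` of a weak bialgebra. -/
def wεs (h : H) : H :=
  (TensorProduct.rid k H)
    ((TensorProduct.map (LinearMap.id) (counit (R := k) ∘ₗ LinearMap.mulLeft k h))
      (comul (R := k) (1 : H)))

/-- A weak Hopf algebra structure on an algebra `H` which is also a coalgebra:
the weak bialgebra axioms together with an antipode `S`. -/
structure WeakHopf : Type _ where
  /-- Δ is multiplicative -/
  comul_mul : ∀ h g : H, comul (R := k) (h * g) = comul (R := k) h * comul (R := k) g
  /-- ε(hgl) = Σ ε(h g₁) ε(g₂ l) -/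
  counit_weak_mul : ∀ h g l : H, counit (R := k) (h * g * l)
      = LinearMap.mul' k k
          ((TensorProduct.map (counit (R := k) ∘ₗ LinearMap.mulLeft k h)
              (counit (R := k) ∘ₗ LinearMap.mulRight k l)) (comul (R := k) g))
  /-- ε(hgl) = Σ ε(h g₂) ε(g₁ l) -/
  counit_weak_mul' : ∀ h g l : H, counit (R := k) (h * g * l)
      = LinearMap.mul' k k
          ((TensorProduct.map (counit (R := k) ∘ₗ LinearMap.mulLeft k h)
              (counit (R := k) ∘ₗ LinearMap.mulRight k l))
            ((TensorProduct.comm k H H) (comul (R := k) g)))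
  /-- (1 ⊗ Δ(1))(Δ(1) ⊗ 1) = Δ²(1) -/
  comul_one_left :
      ((1 : H) ⊗ₜ[k] comul (R := k) (1 : H))
          * ((TensorProduct.assoc k H H H) (comul (R := k) (1 : H) ⊗ₜ[k] (1 : H)))
        = (LinearMap.lTensor H (comul (R := k))) (comul (R := k) (1 : H))
  /-- (Δ(1) ⊗ 1)(1 ⊗ Δ(1)) = Δ²(1) -/
  comul_one_right :
      ((TensorProduct.assoc k H H H) (comul (R := k) (1 : H) ⊗ₜ[k] (1 : H)))
          * ((1 : H) ⊗ₜ[k] comul (R := k) (1 : H))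
        = (LinearMap.lTensor H (comul (R := k))) (comul (R := k) (1 : H))
  /-- the antipode -/
  S : H →ₗ[k] H
  /-- Σ h₁ S(h₂) = ε_t(h) -/
  antipode_t : ∀ h : H,
      LinearMap.mul' k H ((LinearMap.lTensor H S) (comul (R := k) h)) = wεt k H h
  /-- Σ S(h₁) h₂ = ε_s(h) -/
  antipode_s : ∀ h : H,
      LinearMap.mul' k H ((LinearMap.rTensor H S) (comul (R := k) h)) = wεs k H h
  /-- Σ S(h₁) h₂ S(h₃) = S(h) -/
  antipode_mid : ∀ h : H,
      LinearMap.mul' k H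
        ((TensorProduct.map S (LinearMap.mul' k H ∘ₗ LinearMap.lTensor H S))
          ((LinearMap.lTensor H (comul (R := k))) (comul (R := k) h))) = S h

end WeakHopfDefs

section Actions

variable (H : Type*) [Ring H] [Algebra k H] [Coalgebra k H]
variable (C : Type*) [AddCommGroup C] [Module k C] [Coalgebra k C]

/-- The Sweedler sum `Σ (h g₁ · c₁) ε(g₂ · c₂)` appearing in (PMC3). -/
def pmc3RHS (act : H →ₗ[k] C →ₗ[k] C) (h g : H) (c : C) : C :=
  (TensorProduct.rid k C)
    ((TensorProduct.map
        ((TensorProduct.lift act) ∘ₗ (LinearMap.rTensor C (LinearMap.mulLeft k h)))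
        (counit (R := k) ∘ₗ (TensorProduct.lift act)))
      ((TensorProduct.tensorTensorTensorComm k H H C C)
        (comul (R := k) g ⊗ₜ[k] comul (R := k) c)))

/-- The Sweedler sum `Σ ε(g₁ · c₁) (h g₂ · c₂)` appearing in the symmetry condition. -/
def pmc3symRHS (act : H →ₗ[k] C →ₗ[k] C) (h g : H) (c : C) : C :=
  (TensorProduct.lid k C)
    ((TensorProduct.map
        (counit (R := k) ∘ₗ (TensorProduct.lift act))
        ((TensorProduct.lift act) ∘ₗ (LinearMap.rTensor C (LinearMap.mulLeft k h))))
      ((TensorProduct.tensorTensorTensorComm k H H C C)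
        (comul (R := k) g ⊗ₜ[k] comul (R := k) c)))

/-- (MC2)/(PMC2): `Δ(h·c) = (h₁·c₁) ⊗ (h₂·c₂)`. -/
def SweedlerComulCompat (act : H →ₗ[k] C →ₗ[k] C) : Prop :=
  ∀ (h : H) (c : C),
    comul (R := k) (act h c)
      = (TensorProduct.map (TensorProduct.lift act) (TensorProduct.lift act))
          ((TensorProduct.tensorTensorTensorComm k H H C C)
            (comul (R := k) h ⊗ₜ[k] comul (R := k) c))

/-- `C` is a left partial `H`-module coalgebra via `act` (`act h c = h · c`). -/
structure IsPartialModuleCoalgebra (act : H →ₗ[k] C →ₗ[k] C) : Prop where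
  pmc1 : ∀ c : C, act 1 c = c
  pmc2 : SweedlerComulCompat k H C act
  pmc3 : ∀ (h g : H) (c : C), act h (act g c) = pmc3RHS k H C act h g c

/-- `C` is a symmetric left partial `H`-module coalgebra via `act`. -/
structure IsSymmetricPartialModuleCoalgebra (act : H →ₗ[k] C →ₗ[k] C)
    extends IsPartialModuleCoalgebra k H C act : Prop where
  pmc3sym : ∀ (h g : H) (c : C), act h (act g c) = pmc3symRHS k H C act h g c

/-- `C` is a left `H`-module coalgebra via `act`. -/
structure IsModuleCoalgebra (act : H →ₗ[k] C →ₗ[k] C) : Prop where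
  mc1 : ∀ c : C, act 1 c = c
  mc2 : SweedlerComulCompat k H C act
  mc3 : ∀ (h g : H) (c : C), act h (act g c) = act (h * g) c
  mc4 : ∀ (h : H) (c : C), counit (R := k) (act h c) = counit (R := k) (act (wεs k H h) c)

end Actions

end


noncomputable section AuxProof

open TensorProduct LinearMap

variable (k : Type*) [Field k] (H : Type*) [Ring H] [Algebra k H] [Coalgebra k H]

/-- `ε_s` as a bundled linear map. -/
noncomputable def muS : H →ₗ[k] H :=
  (TensorProduct.rid k H).toLinearMap ∘ₗ (LinearMap.lTensor H (counit (R := k))) ∘ₗ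
    (LinearMap.mulRight k (comul (R := k) (1 : H))) ∘ₗ (TensorProduct.mk k H H 1)

/-- `a ⊗ b ↦ ε(b) • a`. -/
noncomputable def Reps : H ⊗[k] H →ₗ[k] H :=
  (TensorProduct.rid k H).toLinearMap ∘ₗ LinearMap.lTensor H (counit (R := k))

variable {k H}

lemma muS_eq (h : H) :
    muS k H h = (TensorProduct.rid k H)
      ((LinearMap.lTensor H ((counit (R := k)) ∘ₗ LinearMap.mulLeft k h))
        (comul (R := k) (1 : H))) := by
  have key : ∀ u : H ⊗[k] H,
      (LinearMap.lTensor H (counit (R := k))) ((1 ⊗ₜ[k] h) * u)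
        = (LinearMap.lTensor H ((counit (R := k)) ∘ₗ LinearMap.mulLeft k h)) u := by
    intro u
    induction u using TensorProduct.induction_on with
    | zero => simp
    | tmul x y => simp [Algebra.TensorProduct.tmul_mul_tmul]
    | add u v hu hv => simp [mul_add, hu, hv]
  simp only [muS, LinearMap.comp_apply, TensorProduct.mk_apply, LinearMap.mulRight_apply,
    LinearEquiv.coe_coe]
  rw [key]

lemma muS_wεs (h : H) : muS k H h = wεs k H h := by
  rw [muS_eq, wεs]
  rfl

lemma mulLeft_tmul (a b : H) :
    LinearMap.mulLeft k (a ⊗ₜ[k] b : H ⊗[k] H)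
      = TensorProduct.map (LinearMap.mulLeft k a) (LinearMap.mulLeft k b) :=
  TensorProduct.ext' fun x y => by simp [Algebra.TensorProduct.tmul_mul_tmul]

lemma muS_lid (f : H →ₗ[k] k) (u : H ⊗[k] H) :
    muS k H ((TensorProduct.lid k H) ((LinearMap.rTensor H f) u))
      = (TensorProduct.lid k H) ((TensorProduct.map f (muS k H)) u) := by
  induction u using TensorProduct.induction_on with
  | zero => simp
  | tmul x y => simp
  | add u v hu hv => simp [hu, hv]

lemma lemC (wh : WeakHopf k H) (b x : H) :
    muS k H (b * x) = (TensorProduct.lid k H)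
      ((TensorProduct.map ((counit (R := k)) ∘ₗ LinearMap.mulLeft k b) (muS k H))
        (comul (R := k) x)) := by
  set w : H := (TensorProduct.lid k H)
    ((LinearMap.rTensor H ((counit (R := k)) ∘ₗ LinearMap.mulLeft k b)) (comul (R := k) x))
    with hw
  have hfun : (counit (R := k)) ∘ₗ LinearMap.mulLeft k (b * x)
      = (counit (R := k)) ∘ₗ LinearMap.mulLeft k w := by
    ext z
    simp only [LinearMap.comp_apply, LinearMap.mulLeft_apply]
    rw [wh.counit_weak_mul b x z, hw]
    generalize comul (R := k) x = q
    induction q using TensorProduct.induction_on with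
    | zero => simp
    | tmul u v =>
        simp [LinearMap.mul'_apply, smul_mul_assoc, smul_eq_mul]
    | add u v hu hv => simp only [map_add, LinearMap.add_apply, add_mul, hu, hv]
  calc muS k H (b * x)
      = (TensorProduct.rid k H)
        ((LinearMap.lTensor H ((counit (R := k)) ∘ₗ LinearMap.mulLeft k (b * x)))
          (comul (R := k) (1 : H))) := muS_eq _
    _ = (TensorProduct.rid k H)
        ((LinearMap.lTensor H ((counit (R := k)) ∘ₗ LinearMap.mulLeft k w))
          (comul (R := k) (1 : H))) := by rw [hfun]
    _ = muS k H w := (muS_eq _).symm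
    _ = _ := by rw [hw, muS_lid]

lemma keyLemma (wh : WeakHopf k H) (z : H ⊗[k] H) :
    (LinearMap.lTensor H (muS k H)) (z * comul (R := k) (1 : H))
      = (TensorProduct.map
          ((Reps k H) ∘ₗ LinearMap.mulLeft k z ∘ₗ (comul (R := k))) (muS k H))
        (comul (R := k) (1 : H)) := by
  have assocLemma : ∀ (a b : H) (u : (H ⊗[k] H) ⊗[k] H),
      (TensorProduct.map (LinearMap.mulLeft k a)
        ((TensorProduct.lid k H).toLinearMap ∘ₗ
          TensorProduct.map ((counit (R := k)) ∘ₗ LinearMap.mulLeft k b) (muS k H)))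
        ((TensorProduct.assoc k H H H) u)
      = (TensorProduct.map ((Reps k H) ∘ₗ LinearMap.mulLeft k (a ⊗ₜ[k] b)) (muS k H)) u := by
    intro a b u
    induction u using TensorProduct.induction_on with
    | zero => rw [LinearEquiv.map_zero, LinearMap.map_zero, LinearMap.map_zero]
    | tmul p z' =>
        induction p using TensorProduct.induction_on with
        | zero => rw [TensorProduct.zero_tmul, LinearEquiv.map_zero, LinearMap.map_zero,
            LinearMap.map_zero]
        | tmul x y =>
            simp only [TensorProduct.assoc_tmul, TensorProduct.map_tmul,
              LinearMap.comp_apply, LinearMap.mulLeft_apply, LinearEquiv.coe_coe,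
              TensorProduct.lid_tmul, Reps, _root_.mulLeft_tmul,
              TensorProduct.rid_tmul, LinearMap.lTensor_tmul]
            rw [TensorProduct.smul_tmul]
        | add p q hp hq =>
            simp only [TensorProduct.add_tmul, map_add, hp, hq]
    | add u v hu hv => simp only [map_add, hu, hv]
  induction z using TensorProduct.induction_on with
  | zero =>
      rw [zero_mul, map_zero, LinearMap.mulLeft_zero_eq_zero, LinearMap.zero_comp,
        LinearMap.comp_zero, TensorProduct.map_zero_left, LinearMap.zero_apply]
  | add u v hu hv =>
      have hml : LinearMap.mulLeft k (u + v)
          = LinearMap.mulLeft k u + LinearMap.mulLeft k v := by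
        ext x; simp [add_mul]
      rw [add_mul, map_add, hu, hv, hml, LinearMap.add_comp, LinearMap.comp_add,
        TensorProduct.map_add_left, LinearMap.add_apply]
  | tmul a b =>
      have h3 : muS k H ∘ₗ LinearMap.mulLeft k b
          = ((TensorProduct.lid k H).toLinearMap ∘ₗ
              TensorProduct.map ((counit (R := k)) ∘ₗ LinearMap.mulLeft k b) (muS k H))
            ∘ₗ (comul (R := k)) := by
        ext x
        simpa using lemC wh b x
      conv_lhs => rw [show (a ⊗ₜ[k] b : H ⊗[k] H) * comul (R := k) (1 : H)
            = LinearMap.mulLeft k (a ⊗ₜ[k] b : H ⊗[k] H) (comul (R := k) (1 : H)) from rfl,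
          _root_.mulLeft_tmul, ← LinearMap.comp_apply, LinearMap.lTensor_comp_map, h3,
          ← LinearMap.map_comp_lTensor, LinearMap.comp_apply,
          ← Coalgebra.coassoc_apply, assocLemma a b, ← LinearMap.comp_apply,
          LinearMap.map_comp_rTensor, LinearMap.comp_assoc]

lemma Lpp (wh : WeakHopf k H) (g : H) :
    (LinearMap.lTensor H (muS k H)) (comul (R := k) g)
      = (LinearMap.rTensor H (LinearMap.mulLeft k g))
          ((LinearMap.lTensor H (muS k H)) (comul (R := k) (1 : H))) := by
  have h0 : comul (R := k) g = comul (R := k) g * comul (R := k) (1 : H) := by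
    rw [← wh.comul_mul, mul_one]
  conv_lhs => rw [h0]
  rw [keyLemma wh (comul (R := k) g)]
  have h2 : (Reps k H) ∘ₗ LinearMap.mulLeft k (comul (R := k) g) ∘ₗ (comul (R := k))
      = LinearMap.mulLeft k g := by
    ext x
    simp only [LinearMap.comp_apply, LinearMap.mulLeft_apply]
    rw [← wh.comul_mul]
    simp [Reps]
  rw [h2, ← LinearMap.rTensor_comp_lTensor, LinearMap.comp_apply]

end AuxProof

noncomputable section AuxProof2

open TensorProduct LinearMap

variable {k : Type*} [Field k] {H : Type*} [Ring H] [Algebra k H] [Coalgebra k H]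
variable {C : Type*} [AddCommGroup C] [Module k C] [Coalgebra k C]

/-- The map `x ↦ Σ (lift act)((h ⊗ 1) * x ⊗-part applied) ...`, i.e. the linear map in the
`H ⊗ H` slot of `pmc3RHS`. -/
noncomputable def Fmap (act : H →ₗ[k] C →ₗ[k] C) (h : H) (c : C) :
    H ⊗[k] H →ₗ[k] C :=
  (TensorProduct.rid k C).toLinearMap ∘ₗ
  (TensorProduct.map
      ((TensorProduct.lift act) ∘ₗ (LinearMap.rTensor C (LinearMap.mulLeft k h)))
      ((counit (R := k)) ∘ₗ (TensorProduct.lift act))) ∘ₗ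
  (TensorProduct.tensorTensorTensorComm k H H C C).toLinearMap ∘ₗ
  ((TensorProduct.mk k (H ⊗[k] H) (C ⊗[k] C)).flip (comul (R := k) c))

lemma Fmap_comul (act : H →ₗ[k] C →ₗ[k] C) (h g : H) (c : C) :
    Fmap act h c (comul (R := k) g) = pmc3RHS k H C act h g c := rfl

lemma Fmap_S1 (act : H →ₗ[k] C →ₗ[k] C) (h g : H) (c : C) :
    Fmap act (h * g) c = (Fmap act h c) ∘ₗ LinearMap.rTensor H (LinearMap.mulLeft k g) := by
  apply TensorProduct.ext'
  intro a b
  simp only [Fmap, LinearMap.comp_apply, LinearMap.rTensor_tmul, LinearMap.mulLeft_apply,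
    TensorProduct.mk_apply, LinearMap.flip_apply, LinearEquiv.coe_coe]
  generalize comul (R := k) c = q
  induction q using TensorProduct.induction_on with
  | zero => simp
  | tmul c1 c2 =>
      simp [TensorProduct.tensorTensorTensorComm_tmul, TensorProduct.lift.tmul, mul_assoc]
  | add u v hu hv =>
      simp only [TensorProduct.tmul_add, map_add, hu, hv]

lemma Fmap_S2 (act : H →ₗ[k] C →ₗ[k] C) (h : H) (c : C)
    (hε : ∀ (x : H) (d : C),
      counit (R := k) (act x d) = counit (R := k) (act (wεs k H x) d)) :
    Fmap act h c = (Fmap act h c) ∘ₗ LinearMap.lTensor H (muS k H) := by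
  apply TensorProduct.ext'
  intro a b
  simp only [Fmap, LinearMap.comp_apply, LinearMap.lTensor_tmul,
    TensorProduct.mk_apply, LinearMap.flip_apply, LinearEquiv.coe_coe]
  generalize comul (R := k) c = q
  induction q using TensorProduct.induction_on with
  | zero => simp
  | tmul c1 c2 =>
      simp only [TensorProduct.tensorTensorTensorComm_tmul, TensorProduct.map_tmul,
        LinearMap.comp_apply, TensorProduct.lift.tmul, TensorProduct.rid_tmul]
      rw [muS_wεs, ← hε b c2]
  | add u v hu hv =>
      simp only [TensorProduct.tmul_add, map_add, hu, hv]

end AuxProof2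

/-- A left partial `H`-module coalgebra `C` is a (global) left `H`-module
coalgebra via the same action map if and only if `ε(h·c) = ε(ε_s(h)·c)` for all `h, c`. -/
theorem partial_module_coalgebra_global_iff
    (k : Type*) [Field k] (H : Type*) [Ring H] [Algebra k H] [Coalgebra k H]
    (C : Type*) [AddCommGroup C] [Module k C] [Coalgebra k C]
    (wh : WeakHopf k H) (act : H →ₗ[k] C →ₗ[k] C)
    (hp : IsPartialModuleCoalgebra k H C act) :
    IsModuleCoalgebra k H C act ↔
      ∀ (h : H) (c : C),
        counit (R := k) (act h c) = counit (R := k) (act (wεs k H h) c) := by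
  constructor
  · intro hm
    exact hm.mc4
  · intro hε
    refine ⟨hp.pmc1, hp.pmc2, ?_, hε⟩
    intro h g c
    have e2 := hp.pmc3 (h * g) 1 c
    rw [hp.pmc1 c] at e2
    rw [hp.pmc3 h g c, e2, ← Fmap_comul act h g c, ← Fmap_comul act (h * g) 1 c,
      Fmap_S1 act h g c, LinearMap.comp_apply]
    have s2 : ∀ x : H ⊗[k] H, Fmap act h c x
        = Fmap act h c ((LinearMap.lTensor H (muS k H)) x) := by
      intro x
      conv_lhs => rw [Fmap_S2 act h c hε]
      rfl
    rw [s2 (comul (R := k) g),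
      s2 ((LinearMap.rTensor H (LinearMap.mulLeft k g)) (comul (R := k) (1 : H)))]
    congr 1
    have comm : ∀ u : H ⊗[k] H,
        (LinearMap.rTensor H (LinearMap.mulLeft k g)) ((LinearMap.lTensor H (muS k H)) u)
          = (LinearMap.lTensor H (muS k H))
              ((LinearMap.rTensor H (LinearMap.mulLeft k g)) u) := by
      intro u
      induction u using TensorProduct.induction_on with
      | zero => simp
      | tmul x y => simp
      | add u v hu hv => simp [hu, hv]
    rw [Lpp wh g, comm]
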